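/- arXiv:2504.00346 — 7 statements merged into one kernel-verified Lean document; each statement's English description precedes it below -/
import Mathlib

section
/- Let L be a finite nonempty set, let Σ be any type, let δ ∈ [0,1) and let C be a real number with C > √δ. Let F : L → Σ be a function and let 𝓕 be a finite set of functions from L to Σ such that (i) any two distinct f, g ∈ 𝓕 agree on at most δ·|L| points of L, and (ii) every f ∈ 𝓕 agrees with F on at least C·|L| points of L. Then |𝓕| ≤ C/(C² − δ). -/
set_option maxRecDepth 10000

open Finset


private lemma list_decoding_arith (δ C nR mR S : ℝ) (hδ0 : 0 ≤ δ) (hC0 : 0 < C)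
    (hδC : δ < C ^ 2) (hn1 : 1 ≤ nR) (hm1 : 1 ≤ mR)
    (hSlb : mR * (C * nR) ≤ S)
    (hkey : S ^ 2 ≤ nR * (S + mR * (mR - 1) * (δ * nR))) :
    mR * (C ^ 2 - δ) ≤ C := by
  by_cases hmc : mR * C < 1
  · nlinarith
  · push_neg at hmc
    have hs0 : mR * C * nR ≤ S := by nlinarith
    have hns0 : nR ≤ mR * C * nR := by nlinarith
    have hmono : (mR * C * nR) ^ 2 - nR * (mR * C * nR) ≤ S ^ 2 - nR * S := by
      nlinarith [mul_nonneg (sub_nonneg.mpr hs0)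
        (show (0:ℝ) ≤ S + mR * C * nR - nR by linarith)]
    have hP : mR ^ 2 * C ^ 2 * nR ^ 2 - mR * C * nR ^ 2 ≤ mR * (mR - 1) * δ * nR ^ 2 := by
      nlinarith [hmono, hkey]
    have hX : mR ^ 2 * C ^ 2 - mR * C - mR * (mR - 1) * δ ≤ 0 := by
      by_contra h
      push_neg at h
      nlinarith [mul_pos (show (0:ℝ) < nR ^ 2 by positivity) h]
    have hY : mR * C ^ 2 - C - (mR - 1) * δ ≤ 0 := by
      by_contra h
      push_neg at h
      nlinarith [mul_pos (show (0:ℝ) < mR by linarith) h]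
    nlinarith

/-- List decoding bound (Blinovsky-style): if all pairwise agreements in `𝓕` are at most
`δ·|L|` and every member of `𝓕` agrees with `F` on at least `C·|L|` points, with `C > √δ`,
then `|𝓕| ≤ C / (C² − δ)`. -/
theorem list_decoding {L Alph : Type*} [Fintype L] [Nonempty L]
    (δ C : ℝ) (hδ0 : 0 ≤ δ) (hδ1 : δ < 1) (hC : Real.sqrt δ < C)
    (F : L → Alph) (𝓕 : Finset (L → Alph))
    (hpair : ∀ f ∈ 𝓕, ∀ g ∈ 𝓕, f ≠ g →
      (Nat.card {x : L // f x = g x} : ℝ) ≤ δ * Fintype.card L)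
    (hagree : ∀ f ∈ 𝓕, C * Fintype.card L ≤ (Nat.card {x : L // f x = F x} : ℝ)) :
    (𝓕.card : ℝ) ≤ C / (C ^ 2 - δ) := by
  classical
  have hC0 : 0 < C := lt_of_le_of_lt (Real.sqrt_nonneg δ) hC
  have hδC : δ < C ^ 2 := by
    nlinarith [Real.sq_sqrt hδ0, Real.sqrt_nonneg δ]
  rcases Finset.eq_empty_or_nonempty 𝓕 with h𝓕 | h𝓕
  · simp only [h𝓕, Finset.card_empty, Nat.cast_zero]
    exact div_nonneg hC0.le (by linarith)
  -- notation
  set n : ℕ := Fintype.card L with hn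
  have hn1 : (1:ℝ) ≤ n := by
    have := Fintype.card_pos (α := L); exact_mod_cast this
  set m : ℕ := 𝓕.card with hm
  have hm1 : (1:ℝ) ≤ m := by
    have := Finset.card_pos.mpr h𝓕; exact_mod_cast this
  -- agreement counts as filter cards
  have hcard : ∀ f g : L → Alph,
      (Nat.card {x : L // f x = g x} : ℝ) = ((univ.filter fun x => f x = g x).card : ℝ) := by
    intro f g
    rw [Nat.card_eq_fintype_card, Fintype.card_subtype]
  set A : (L → Alph) → (L → Alph) → ℝ :=
    fun f g => ((univ.filter fun x => f x = g x).card : ℝ) with hA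
  have hAsum : ∀ f g : L → Alph, A f g = ∑ x : L, (if f x = g x then (1:ℝ) else 0) := by
    intro f g
    rw [hA]
    beta_reduce
    rw [Finset.card_filter]
    push_cast
    rfl
  have hAnn : ∀ f g, 0 ≤ A f g := fun f g => by positivity
  have hAle : ∀ f g, A f g ≤ n := by
    intro f g
    have := Finset.card_filter_le (univ : Finset L) (fun x => f x = g x)
    simpa [hA, hn] using (Nat.cast_le (α := ℝ)).mpr this
  have hpair' : ∀ f ∈ 𝓕, ∀ g ∈ 𝓕, f ≠ g → A f g ≤ δ * n := by
    intro f hf g hg hfg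
    have := hpair f hf g hg hfg
    rwa [hcard] at this
  have hagree' : ∀ f ∈ 𝓕, C * n ≤ A f F := by
    intro f hf
    have := hagree f hf
    rwa [hcard] at this
  -- counting function
  set N : L → ℝ := fun x => ((𝓕.filter fun f => f x = F x).card : ℝ) with hN
  have hNsum : ∀ x, N x = ∑ f ∈ 𝓕, (if f x = F x then (1:ℝ) else 0) := by
    intro x
    rw [hN]
    beta_reduce
    rw [Finset.card_filter]
    push_cast
    rfl
  -- first moment
  have hS : ∑ x : L, N x = ∑ f ∈ 𝓕, A f F := by
    simp only [hNsum]
    rw [Finset.sum_comm]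
    refine Finset.sum_congr rfl fun f _ => ?_
    rw [hAsum]
  -- second moment
  have hQ : ∑ x : L, (N x)^2
      = ∑ f ∈ 𝓕, ∑ g ∈ 𝓕, ((univ.filter fun x => f x = F x ∧ g x = F x).card : ℝ) := by
    have h1 : ∀ x, (N x)^2 = ∑ f ∈ 𝓕, ∑ g ∈ 𝓕,
        (if f x = F x ∧ g x = F x then (1:ℝ) else 0) := by
      intro x
      rw [hNsum, sq, Finset.sum_mul_sum]
      refine Finset.sum_congr rfl fun f _ => Finset.sum_congr rfl fun g _ => ?_
      by_cases h1 : f x = F x <;> by_cases h2 : g x = F x <;> simp [h1, h2]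
    simp only [h1]
    rw [Finset.sum_comm]
    refine Finset.sum_congr rfl fun f _ => ?_
    rw [Finset.sum_comm]
    refine Finset.sum_congr rfl fun g _ => ?_
    rw [Finset.card_filter]
    push_cast
    rfl
  have hQle : ∑ x : L, (N x)^2 ≤ (∑ f ∈ 𝓕, A f F) + m * ((m : ℝ) - 1) * (δ * n) := by
    rw [hQ]
    have step : ∀ f ∈ 𝓕, ∑ g ∈ 𝓕,
        ((univ.filter fun x => f x = F x ∧ g x = F x).card : ℝ)
        ≤ A f F + ((m : ℝ) - 1) * (δ * n) := by
      intro f hf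
      rw [← Finset.add_sum_erase _ _ hf]
      have hdiag : ((univ.filter fun x => f x = F x ∧ f x = F x).card : ℝ) = A f F := by
        rw [hAsum, Finset.card_filter]
        push_cast
        refine Finset.sum_congr rfl fun x _ => ?_
        by_cases h : f x = F x <;> simp [h]
      rw [hdiag]
      gcongr
      have : ∑ g ∈ 𝓕.erase f, ((univ.filter fun x => f x = F x ∧ g x = F x).card : ℝ)
          ≤ ∑ g ∈ 𝓕.erase f, (δ * n) := by
        refine Finset.sum_le_sum fun g hg => ?_
        have hg𝓕 := Finset.mem_of_mem_erase hg
        have hne : f ≠ g := fun h => (Finset.ne_of_mem_erase hg) h.symm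
        refine le_trans ?_ (hpair' f hf g hg𝓕 hne)
        have hsub : (univ.filter fun x => f x = F x ∧ g x = F x)
            ⊆ (univ.filter fun x => f x = g x) := by
          intro x hx
          simp only [Finset.mem_filter] at hx ⊢
          exact ⟨hx.1, hx.2.1.trans hx.2.2.symm⟩
        exact_mod_cast Nat.cast_le.mpr (Finset.card_le_card hsub)
      refine this.trans ?_
      rw [Finset.sum_const, nsmul_eq_mul]
      have hcarde : ((𝓕.erase f).card : ℝ) = (m : ℝ) - 1 := by
        rw [Finset.card_erase_of_mem hf]
        have := Finset.card_pos.mpr h𝓕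
        push_cast [Nat.cast_sub (by omega : 1 ≤ 𝓕.card)]
        ring_nf
        rw [hm]
      rw [hcarde]
    calc ∑ f ∈ 𝓕, ∑ g ∈ 𝓕, ((univ.filter fun x => f x = F x ∧ g x = F x).card : ℝ)
        ≤ ∑ f ∈ 𝓕, (A f F + ((m : ℝ) - 1) * (δ * n)) := Finset.sum_le_sum step
      _ = (∑ f ∈ 𝓕, A f F) + m * ((m : ℝ) - 1) * (δ * n) := by
          rw [Finset.sum_add_distrib, Finset.sum_const, nsmul_eq_mul]; ring
  -- Cauchy-Schwarz
  have hCS : (∑ x : L, N x)^2 ≤ (n : ℝ) * ∑ x : L, (N x)^2 := by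
    have := sq_sum_le_card_mul_sum_sq (s := (univ : Finset L)) (f := N)
    simpa [hn] using this
  set S : ℝ := ∑ f ∈ 𝓕, A f F with hSdef
  have hSlb : (m : ℝ) * (C * n) ≤ S := by
    calc (m : ℝ) * (C * n) = ∑ _f ∈ 𝓕, C * n := by
          rw [Finset.sum_const, nsmul_eq_mul]
      _ ≤ S := Finset.sum_le_sum hagree'
  have hkey : S^2 ≤ n * (S + m * ((m : ℝ) - 1) * (δ * n)) := by
    rw [hS] at hCS
    refine hCS.trans ?_
    exact mul_le_mul_of_nonneg_left hQle (by linarith)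
  -- conclude
  rw [le_div_iff₀ (by linarith : (0:ℝ) < C ^ 2 - δ)]
  exact list_decoding_arith δ C n m S hδ0 hC0 hδC hn1 hm1 hSlb hkey
end

section
/- Let A and B be finite nonempty sets and let W : A × B → ℝ≥0 be a biregular weight function: there are positive reals d_A, d_B such that Σ_{b∈B} W(a,b) = d_A for every a ∈ A and Σ_{a∈A} W(a,b) = d_B for every b ∈ B. Define the adjacency operator T on functions by (TF)(b) = (1/d_B)·Σ_{a∈A} W(a,b)·F(a). Suppose λ ≥ 0 is such that for every F : A → ℝ with Σ_{a∈A} F(a) = 0 one has (1/|B|)·Σ_{b∈B} (TF)(b)² ≤ λ²·(1/|A|)·Σ_{a∈A} F(a)². Then for every nonempty S ⊆ A with |S|/|A| = ε and every G : B → ℝ with 0 ≤ G(b) ≤ 1 for all b, one has |(1/(|S|·d_A))·Σ_{a∈S} Σ_{b∈B} W(a,b)·G(b) − (1/|B|)·Σ_{b∈B} G(b)| ≤ λ/√ε. -/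
/-- Spectral sampling lemma for a biregular weighted bipartite graph. -/
theorem spectral_sampling {A B : Type*} [Fintype A] [Fintype B] [Nonempty A] [Nonempty B]
    (W : A → B → ℝ) (hW : ∀ a b, 0 ≤ W a b)
    (dA dB : ℝ) (hdA : 0 < dA) (hdB : 0 < dB)
    (hrow : ∀ a, ∑ b, W a b = dA) (hcol : ∀ b, ∑ a, W a b = dB)
    (lam : ℝ) (hlam : 0 ≤ lam)
    (hspec : ∀ F : A → ℝ, (∑ a, F a) = 0 →
      (1 / (Fintype.card B : ℝ)) * ∑ b, ((1 / dB) * ∑ a, W a b * F a) ^ 2 ≤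
        lam ^ 2 * ((1 / (Fintype.card A : ℝ)) * ∑ a, F a ^ 2))
    (S : Finset A) (hS : S.Nonempty) (ε : ℝ)
    (hε : (S.card : ℝ) / (Fintype.card A : ℝ) = ε)
    (G : B → ℝ) (hG0 : ∀ b, 0 ≤ G b) (hG1 : ∀ b, G b ≤ 1) :
    |(1 / ((S.card : ℝ) * dA)) * ∑ a ∈ S, ∑ b, W a b * G b -
        (1 / (Fintype.card B : ℝ)) * ∑ b, G b| ≤ lam / Real.sqrt ε := by
  classical
  set nA : ℝ := (Fintype.card A : ℝ) with hnAdef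
  set nB : ℝ := (Fintype.card B : ℝ) with hnBdef
  have hnA : (0:ℝ) < nA := by
    rw [hnAdef]; exact_mod_cast Fintype.card_pos
  have hnB : (0:ℝ) < nB := by
    rw [hnBdef]; exact_mod_cast Fintype.card_pos
  have hSc : (0:ℝ) < (S.card : ℝ) := by exact_mod_cast hS.card_pos
  have hε0 : 0 < ε := by rw [← hε]; positivity
  have hεnA : ε * nA = (S.card : ℝ) := by
    rw [← hε, div_mul_cancel₀ _ hnA.ne']
  have hεle : ε ≤ 1 := by
    rw [← hε]
    apply div_le_one_of_le₀ _ hnA.le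
    rw [hnAdef]
    exact_mod_cast Finset.card_le_card (S.subset_univ)
  have hAB : nA * dA = nB * dB := by
    have h1 : ∑ a : A, ∑ b : B, W a b = nA * dA := by
      simp [hrow, mul_comm]
      exact Or.inl hnAdef.symm
    have h2 : ∑ b : B, ∑ a : A, W a b = nB * dB := by
      simp [hcol, mul_comm]
      exact Or.inl hnBdef.symm
    rw [← h1, ← h2, Finset.sum_comm]
  set F : A → ℝ := fun a => (if a ∈ S then (1:ℝ) else 0) - ε with hFdef
  have hind : ∑ a : A, (if a ∈ S then (1:ℝ) else 0) = (S.card : ℝ) := by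
    simp
  have hFsum : ∑ a, F a = 0 := by
    have : ∑ a, F a = (S.card : ℝ) - nA * ε := by
      rw [hFdef, Finset.sum_sub_distrib, hind]
      simp [hnAdef, mul_comm]
    rw [this, ← hεnA]; ring
  have hT : ∀ b, ∑ a, W a b * F a = (∑ a ∈ S, W a b) - ε * dB := by
    intro b
    simp only [hFdef, mul_sub, Finset.sum_sub_distrib, mul_ite, mul_one, mul_zero,
      Finset.sum_ite_mem, Finset.univ_inter]
    rw [← Finset.sum_mul, hcol b]
    ring
  set P : ℝ := ∑ b, G b * (∑ a ∈ S, W a b) with hPdef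
  set Q : ℝ := ∑ b, G b with hQdef
  have hswap : ∑ a ∈ S, ∑ b, W a b * G b = P := by
    rw [Finset.sum_comm, hPdef]
    exact Finset.sum_congr rfl fun b _ => by
      rw [Finset.mul_sum]; exact Finset.sum_congr rfl fun a _ => mul_comm _ _
  set I : ℝ := ∑ b, G b * ((1 / dB) * ∑ a, W a b * F a) with hIdef
  have hI : I = (1 / dB) * (P - ε * dB * Q) := by
    rw [hIdef]
    calc ∑ b, G b * ((1 / dB) * ∑ a, W a b * F a)
        = ∑ b, (1/dB) * (G b * (∑ a ∈ S, W a b) - ε * dB * G b) :=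
          Finset.sum_congr rfl fun b _ => by rw [hT b]; ring
      _ = (1/dB) * (P - ε * dB * Q) := by
          rw [← Finset.mul_sum, Finset.sum_sub_distrib, ← Finset.mul_sum, hPdef, hQdef]
  have hfrac : (1:ℝ)/nB = ε * dB / ((S.card:ℝ) * dA) := by
    rw [div_eq_div_iff hnB.ne' (by positivity : ((S.card:ℝ) * dA) ≠ 0), ← hεnA]
    linear_combination ε * hAB
  have hkey : (1 / ((S.card : ℝ) * dA)) * (∑ a ∈ S, ∑ b, W a b * G b) - (1 / nB) * Q
      = (dB / ((S.card : ℝ) * dA)) * I := by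
    rw [hswap, hI, hfrac]
    field_simp
  have hG2 : ∑ b, G b ^ 2 ≤ nB := by
    calc ∑ b, G b ^ 2 ≤ ∑ _b : B, (1:ℝ) := by
          apply Finset.sum_le_sum
          intro b _
          nlinarith [hG0 b, hG1 b]
      _ = nB := by simp; exact hnBdef.symm
  have hF2 : ∑ a, F a ^ 2 ≤ (S.card : ℝ) := by
    have hexp : ∑ a, F a ^ 2 = (S.card : ℝ) - 2 * ε * (S.card : ℝ) + nA * ε ^ 2 := by
      have e1 : ∑ a : A, (if a ∈ S then (1:ℝ) else 0) ^ 2 = (S.card : ℝ) := by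
        simp [ite_pow]
      have e2 : ∑ a : A, 2 * (if a ∈ S then (1:ℝ) else 0) * ε = 2 * ε * (S.card : ℝ) := by
        calc ∑ a : A, 2 * (if a ∈ S then (1:ℝ) else 0) * ε
            = 2 * ε * ∑ a : A, (if a ∈ S then (1:ℝ) else 0) := by
              rw [Finset.mul_sum]; exact Finset.sum_congr rfl fun a _ => by ring
          _ = 2 * ε * (S.card : ℝ) := by rw [hind]
      have e3 : ∑ _a : A, ε ^ 2 = nA * ε ^ 2 := by simp [hnAdef, mul_comm]
      calc ∑ a, F a ^ 2
          = ∑ a : A, ((if a ∈ S then (1:ℝ) else 0) ^ 2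
              - 2 * (if a ∈ S then (1:ℝ) else 0) * ε + ε ^ 2) :=
            Finset.sum_congr rfl fun a _ => by rw [hFdef]; ring
        _ = (S.card : ℝ) - 2 * ε * (S.card : ℝ) + nA * ε ^ 2 := by
            rw [Finset.sum_add_distrib, Finset.sum_sub_distrib, e1, e2, e3]
    rw [hexp]
    nlinarith [hεnA, hε0, hSc]
  have hTtot : ∑ b, ((1 / dB) * ∑ a, W a b * F a) ^ 2 ≤ nB * (lam ^ 2 * ε) := by
    have h := hspec F hFsum
    have h2 : (1 / nA) * ∑ a, F a ^ 2 ≤ ε := by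
      rw [one_div, inv_mul_le_iff₀ hnA]
      calc ∑ a, F a ^ 2 ≤ (S.card : ℝ) := hF2
        _ = nA * ε := by rw [← hεnA]; ring
    have h3 : (1 / nB) * ∑ b, ((1 / dB) * ∑ a, W a b * F a) ^ 2 ≤ lam ^ 2 * ε := by
      calc (1 / nB) * ∑ b, ((1 / dB) * ∑ a, W a b * F a) ^ 2
          ≤ lam ^ 2 * ((1 / nA) * ∑ a, F a ^ 2) := h
        _ ≤ lam ^ 2 * ε := mul_le_mul_of_nonneg_left h2 (sq_nonneg lam)
    calc ∑ b, ((1 / dB) * ∑ a, W a b * F a) ^ 2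
        = nB * ((1 / nB) * ∑ b, ((1 / dB) * ∑ a, W a b * F a) ^ 2) := by
          rw [← mul_assoc, mul_one_div, div_self hnB.ne', one_mul]
      _ ≤ nB * (lam ^ 2 * ε) := mul_le_mul_of_nonneg_left h3 hnB.le
  have hCS : I ^ 2 ≤ (∑ b, G b ^ 2) * ∑ b, ((1 / dB) * ∑ a, W a b * F a) ^ 2 :=
    Finset.sum_mul_sq_le_sq_mul_sq _ _ _
  have hTnonneg : 0 ≤ ∑ b, ((1 / dB) * ∑ a, W a b * F a) ^ 2 :=
    Finset.sum_nonneg fun b _ => sq_nonneg _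
  have hI2 : I ^ 2 ≤ nB * (nB * (lam ^ 2 * ε)) :=
    hCS.trans (mul_le_mul hG2 hTtot hTnonneg hnB.le)
  have hD2 : ((1 / ((S.card : ℝ) * dA)) * (∑ a ∈ S, ∑ b, W a b * G b) - (1 / nB) * Q) ^ 2
      ≤ lam ^ 2 / ε := by
    rw [hkey, mul_pow]
    have hεval : dB / ((S.card : ℝ) * dA) = 1 / (ε * nB) := by
      rw [div_eq_div_iff (by positivity) (by positivity), ← hεnA]
      linear_combination ε * hAB.symm
    rw [hεval]
    calc (1 / (ε * nB)) ^ 2 * I ^ 2 ≤ (1 / (ε * nB)) ^ 2 * (nB * (nB * (lam ^ 2 * ε))) :=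
          mul_le_mul_of_nonneg_left hI2 (by positivity)
      _ = lam ^ 2 / ε := by field_simp
  have hRHS : (lam / Real.sqrt ε) ^ 2 = lam ^ 2 / ε := by
    rw [div_pow, Real.sq_sqrt hε0.le]
  calc |(1 / ((S.card : ℝ) * dA)) * ∑ a ∈ S, ∑ b, W a b * G b - (1 / nB) * ∑ b, G b|
      = Real.sqrt (((1 / ((S.card : ℝ) * dA)) * (∑ a ∈ S, ∑ b, W a b * G b)
          - (1 / nB) * Q) ^ 2) := by rw [Real.sqrt_sq_eq_abs]
    _ ≤ Real.sqrt ((lam / Real.sqrt ε) ^ 2) := Real.sqrt_le_sqrt (by rw [hRHS]; exact hD2)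
    _ = lam / Real.sqrt ε := Real.sqrt_sq (by positivity)
end

section
/- Let F be a field, let m ≥ 1, let f ∈ F[x_1,…,x_m], let A_1,…,A_m ⊆ F be finite nonempty sets, let h : A_1 × ⋯ × A_m → F be a function, and let ĥ ∈ F[x_1,…,x_m] be the unique polynomial with deg_{x_i} ĥ ≤ |A_i| − 1 for every i that agrees with h on A_1 × ⋯ × A_m. Then f(a) = h(a) for all a ∈ A_1 × ⋯ × A_m if and only if there exist polynomials g_1,…,g_m ∈ F[x_1,…,x_m] such that f = Σ_{i=1}^m V_{A_i}·g_i + ĥ, where V_{A_i}(x_i) = ∏_{α∈A_i}(x_i − α). Furthermore, if (d_1,…,d_m) are integers with d_i ≥ |A_i| for every i and deg_{x_i} f ≤ d_i for every i, then the g_i can be chosen so that g_i has individual degrees at most (d_1,…,d_i − |A_i|,…,d_m). -/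
open MvPolynomial

/-- The vanishing polynomial of the finite set `A i ⊆ F` in the variable `xᵢ`. -/
noncomputable def vanishingMv {F : Type*} [Field F] {m : ℕ} (A : Fin m → Finset F)
    (i : Fin m) : MvPolynomial (Fin m) F :=
  ∏ α ∈ A i, (MvPolynomial.X i - MvPolynomial.C α)

lemma eval_vanishingMv {F : Type*} [Field F] {m : ℕ} (A : Fin m → Finset F) (i : Fin m)
    (a : Fin m → F) (ha : a i ∈ A i) : MvPolynomial.eval a (vanishingMv A i) = 0 := by
  rw [vanishingMv, map_prod]
  exact Finset.prod_eq_zero ha (by simp)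

lemma degreeOf_monomial_le {F : Type*} [CommSemiring F] {m : ℕ} (s : Fin m →₀ ℕ) (c : F)
    (j : Fin m) : (MvPolynomial.monomial s c).degreeOf j ≤ s j := by
  rcases eq_or_ne c 0 with rfl | hc
  · simp
  · rw [MvPolynomial.degreeOf_monomial_eq s j hc]

lemma degreeOf_aevalX_le {F : Type*} [Field F] {m : ℕ} (p : Polynomial F) (i j : Fin m) :
    MvPolynomial.degreeOf j (Polynomial.aeval (MvPolynomial.X i : MvPolynomial (Fin m) F) p)
      ≤ if j = i then p.natDegree else 0 := by
  rw [Polynomial.aeval_eq_sum_range]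
  refine (MvPolynomial.degreeOf_sum_le _ _ _).trans (Finset.sup_le fun k hk => ?_)
  rw [MvPolynomial.smul_eq_C_mul]
  refine (MvPolynomial.degreeOf_C_mul_le _ _ _).trans ?_
  refine (MvPolynomial.degreeOf_pow_le _ _ _).trans ?_
  rw [MvPolynomial.degreeOf_X]
  split_ifs with hji
  · simpa using Nat.lt_succ_iff.mp (Finset.mem_range.mp hk)
  · simp

/-- Division of `f` by the vanishing polynomial in variable `i`, with degree control. -/
lemma div_step {F : Type*} [Field F] {m : ℕ} (A : Fin m → Finset F) (i : Fin m)
    (hAi : (A i).Nonempty) (f : MvPolynomial (Fin m) F) :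
    ∃ q r : MvPolynomial (Fin m) F,
      f = vanishingMv A i * q + r ∧
      r.degreeOf i < (A i).card ∧
      (∀ j, r.degreeOf j ≤ f.degreeOf j) ∧
      (∀ j, j ≠ i → q.degreeOf j ≤ f.degreeOf j) ∧
      q.degreeOf i ≤ f.degreeOf i - (A i).card := by
  classical
  set n := (A i).card with hn
  have hn1 : 0 < n := Finset.card_pos.mpr hAi
  set V : Polynomial F := ∏ α ∈ A i, (Polynomial.X - Polynomial.C α) with hV
  have hVmonic : V.Monic :=
    Polynomial.monic_prod_of_monic _ _ fun α _ => Polynomial.monic_X_sub_C α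
  have hVdeg : V.natDegree = n := by
    rw [hV, Polynomial.natDegree_prod_of_monic _ _ fun α _ => Polynomial.monic_X_sub_C α]
    simp [hn]
  have hV1 : V ≠ 1 := by
    intro h
    rw [h, Polynomial.natDegree_one] at hVdeg
    omega
  have hφV : Polynomial.aeval (MvPolynomial.X i : MvPolynomial (Fin m) F) V
      = vanishingMv A i := by
    rw [hV, map_prod, vanishingMv]
    simp
  set Q : ℕ → Polynomial F := fun k => Polynomial.X ^ k /ₘ V with hQ
  set R : ℕ → Polynomial F := fun k => Polynomial.X ^ k %ₘ V with hR
  have hQR : ∀ k, (Polynomial.X ^ k : Polynomial F) = V * Q k + R k := fun k => by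
    rw [hQ, hR, add_comm]
    exact (Polynomial.modByMonic_add_div _ V).symm
  have hQdeg : ∀ k, (Q k).natDegree = k - n := fun k => by
    rw [hQ, Polynomial.natDegree_divByMonic _ hVmonic, Polynomial.natDegree_X_pow, hVdeg]
  have hRdeg : ∀ k, (R k).natDegree < n := fun k => by
    simpa [hVdeg] using Polynomial.natDegree_modByMonic_lt (Polynomial.X ^ k) hVmonic hV1
  have hRdeg' : ∀ k, (R k).natDegree ≤ k := fun k => by
    rcases lt_or_ge k n with hk | hk
    · have : R k = Polynomial.X ^ k := by
        rw [hR]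
        refine (Polynomial.modByMonic_eq_self_iff hVmonic).mpr ?_
        rw [Polynomial.degree_X_pow, Polynomial.degree_eq_natDegree hVmonic.ne_zero, hVdeg]
        exact_mod_cast hk
      simp [this]
    · exact le_trans (hRdeg k).le hk
  refine ⟨∑ σ ∈ f.support, MvPolynomial.monomial (σ.erase i) (f.coeff σ) * Polynomial.aeval (MvPolynomial.X i) (Q (σ i)),
          ∑ σ ∈ f.support, MvPolynomial.monomial (σ.erase i) (f.coeff σ) * Polynomial.aeval (MvPolynomial.X i) (R (σ i)),
          ?_, ?_, ?_, ?_, ?_⟩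
  · conv_lhs => rw [f.as_sum]
    rw [Finset.mul_sum, ← Finset.sum_add_distrib]
    refine Finset.sum_congr rfl fun σ hσ => ?_
    have hkey : (MvPolynomial.X i : MvPolynomial (Fin m) F) ^ (σ i)
        = vanishingMv A i * Polynomial.aeval (MvPolynomial.X i) (Q (σ i)) + Polynomial.aeval (MvPolynomial.X i) (R (σ i)) := by
      have := congrArg (Polynomial.aeval (MvPolynomial.X i : MvPolynomial (Fin m) F)) (hQR (σ i))
      rw [map_add, map_mul, hφV] at this
      simpa using this
    calc MvPolynomial.monomial σ (f.coeff σ)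
        = MvPolynomial.X i ^ (σ i) * MvPolynomial.monomial (σ.erase i) (f.coeff σ) := by
          rw [← MvPolynomial.monomial_single_add, Finsupp.single_add_erase]
      _ = _ := by rw [hkey]; ring
  · refine lt_of_le_of_lt ((MvPolynomial.degreeOf_sum_le _ _ _).trans (Finset.sup_le
      fun σ hσ => ?_)) (Nat.sub_lt hn1 one_pos)
    refine (MvPolynomial.degreeOf_mul_le _ _ _).trans ?_
    have h1 := degreeOf_monomial_le (σ.erase i) (f.coeff σ) i
    have h2 := degreeOf_aevalX_le (R (σ i)) i i
    rw [Finsupp.erase_same] at h1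
    rw [if_pos rfl] at h2
    have := hRdeg (σ i)
    omega
  · intro j
    refine (MvPolynomial.degreeOf_sum_le _ _ _).trans (Finset.sup_le fun σ hσ => ?_)
    refine (MvPolynomial.degreeOf_mul_le _ _ _).trans ?_
    have h1 := degreeOf_monomial_le (σ.erase i) (f.coeff σ) j
    have h2 := degreeOf_aevalX_le (R (σ i)) i j
    have h3 : σ j ≤ f.degreeOf j := MvPolynomial.monomial_le_degreeOf j hσ
    rcases eq_or_ne j i with rfl | hji
    · rw [Finsupp.erase_same] at h1
      rw [if_pos rfl] at h2
      have := hRdeg' (σ j)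
      omega
    · rw [Finsupp.erase_ne hji] at h1
      rw [if_neg hji] at h2
      omega
  · intro j hji
    refine (MvPolynomial.degreeOf_sum_le _ _ _).trans (Finset.sup_le fun σ hσ => ?_)
    refine (MvPolynomial.degreeOf_mul_le _ _ _).trans ?_
    have h1 := degreeOf_monomial_le (σ.erase i) (f.coeff σ) j
    have h2 := degreeOf_aevalX_le (Q (σ i)) i j
    have h3 : σ j ≤ f.degreeOf j := MvPolynomial.monomial_le_degreeOf j hσ
    rw [Finsupp.erase_ne hji] at h1
    rw [if_neg hji] at h2
    omega
  · refine (MvPolynomial.degreeOf_sum_le _ _ _).trans (Finset.sup_le fun σ hσ => ?_)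
    refine (MvPolynomial.degreeOf_mul_le _ _ _).trans ?_
    have h1 := degreeOf_monomial_le (σ.erase i) (f.coeff σ) i
    have h2 := degreeOf_aevalX_le (Q (σ i)) i i
    have h3 : σ i ≤ f.degreeOf i := MvPolynomial.monomial_le_degreeOf i hσ
    rw [Finsupp.erase_same] at h1
    rw [if_pos rfl] at h2
    have := hQdeg (σ i)
    omega

/-- Iterated division over a set of variables. -/
lemma reduce_all {F : Type*} [Field F] {m : ℕ} (A : Fin m → Finset F)
    (hA : ∀ i, (A i).Nonempty) (s : Finset (Fin m)) (f : MvPolynomial (Fin m) F) :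
    ∃ (g : Fin m → MvPolynomial (Fin m) F) (r : MvPolynomial (Fin m) F),
      f = (∑ i ∈ s, vanishingMv A i * g i) + r ∧
      (∀ i ∈ s, r.degreeOf i < (A i).card) ∧
      (∀ j, r.degreeOf j ≤ f.degreeOf j) ∧
      (∀ i ∈ s, ∀ j, (g i).degreeOf j ≤
        (if j = i then f.degreeOf j - (A j).card else f.degreeOf j)) := by
  classical
  induction s using Finset.cons_induction with
  | empty => exact ⟨0, f, by simp, by simp, fun j => le_refl _, by simp⟩
  | cons i s hi ih =>
    obtain ⟨g, r, hfe, hrlt, hrle, hg⟩ := ih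
    obtain ⟨q, r', hre, hr'i, hr'le, hqne, hqi⟩ := div_step A i (hA i) r
    refine ⟨Function.update g i q, r', ?_, ?_, ?_, ?_⟩
    · rw [Finset.sum_cons, Function.update_self]
      rw [Finset.sum_congr rfl fun j hj => by
        rw [Function.update_of_ne (ne_of_mem_of_not_mem hj hi) q g]]
      rw [hfe, hre]; ring
    · intro i' hi'
      rcases Finset.mem_cons.mp hi' with rfl | hi's
      · exact hr'i
      · exact lt_of_le_of_lt (hr'le i') (hrlt i' hi's)
    · intro j
      exact le_trans (hr'le j) (hrle j)
    · intro i' hi' j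
      rcases Finset.mem_cons.mp hi' with rfl | hi's
      · rw [Function.update_self]
        split_ifs with hji
        · subst hji
          exact le_trans hqi (Nat.sub_le_sub_right (hrle j) _)
        · exact le_trans (hqne j hji) (hrle j)
      · rw [Function.update_of_ne (ne_of_mem_of_not_mem hi's hi) q g]
        exact hg i' hi's j

/-- A polynomial with small individual degrees vanishing on a grid is zero. -/
lemma mv_eq_zero_of_grid {F : Type*} [Field F] :
    ∀ {m : ℕ} (A : Fin m → Finset F) (p : MvPolynomial (Fin m) F),
      (∀ i, p.degreeOf i < (A i).card) →
      (∀ a : Fin m → F, (∀ i, a i ∈ A i) → MvPolynomial.eval a p = 0) → p = 0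
  | 0, A, p, hdeg, hev => by
      have h0 := hev finZeroElim (fun i => i.elim0)
      rw [p.eq_C_of_isEmpty] at h0 ⊢
      rw [MvPolynomial.eval_C] at h0
      rw [h0, map_zero]
  | (n+1), A, p, hdeg, hev => by
      have hq : finSuccEquiv F n p = 0 := by
        ext k mσ
        rw [Polynomial.coeff_zero]
        have : (finSuccEquiv F n p).coeff k = 0 := by
          apply mv_eq_zero_of_grid (fun j => A j.succ)
          · intro j
            exact lt_of_le_of_lt (degreeOf_coeff_finSuccEquiv p j k) (hdeg j.succ)
          · intro a ha
            have hr : Polynomial.map (MvPolynomial.eval a) (finSuccEquiv F n p) = 0 := by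
              apply Polynomial.eq_zero_of_natDegree_lt_card_of_eval_eq_zero' _ (A 0)
              · intro y hy
                rw [← MvPolynomial.eval_eq_eval_mv_eval']
                refine hev (Fin.cons y a) (fun i => ?_)
                refine Fin.cases ?_ (fun j => ?_) i
                · simpa using hy
                · simpa using ha j
              · calc (Polynomial.map (MvPolynomial.eval a) (finSuccEquiv F n p)).natDegree
                    ≤ (finSuccEquiv F n p).natDegree := Polynomial.natDegree_map_le
                  _ = p.degreeOf 0 := natDegree_finSuccEquiv p
                  _ < (A 0).card := hdeg 0
            have := congrArg (fun pp => Polynomial.coeff pp k) hr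
            simpa using this
        rw [this, MvPolynomial.coeff_zero]
      have : p = (finSuccEquiv F n).symm 0 := by
        rw [← hq, AlgEquiv.symm_apply_apply]
      rw [this, map_zero]

/-- Multivariate side-condition decomposition lemma: `f` agrees with `h` on the grid
`A₁ × ⋯ × A_m` iff `f = Σᵢ V_{Aᵢ}·gᵢ + ĥ`; furthermore, under individual degree bounds
`deg_{xᵢ} f ≤ dᵢ` with `dᵢ ≥ |Aᵢ|`, the `gᵢ` can be chosen with individual degrees at most
`(d₁,…,dᵢ − |Aᵢ|,…,d_m)`. -/
theorem mv_side_condition_decomposition {F : Type*} [Field F] {m : ℕ} (hm : 1 ≤ m)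
    (f : MvPolynomial (Fin m) F) (A : Fin m → Finset F) (hA : ∀ i, (A i).Nonempty)
    (h : (Fin m → F) → F) (hhat : MvPolynomial (Fin m) F)
    (hhat_deg : ∀ i, hhat.degreeOf i ≤ (A i).card - 1)
    (hhat_agree : ∀ a : Fin m → F, (∀ i, a i ∈ A i) → MvPolynomial.eval a hhat = h a) :
    ((∀ a : Fin m → F, (∀ i, a i ∈ A i) → MvPolynomial.eval a f = h a) ↔
      ∃ g : Fin m → MvPolynomial (Fin m) F, f = (∑ i, vanishingMv A i * g i) + hhat) ∧
    ∀ d : Fin m → ℕ, (∀ i, (A i).card ≤ d i) → (∀ i, f.degreeOf i ≤ d i) →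
      (∀ a : Fin m → F, (∀ i, a i ∈ A i) → MvPolynomial.eval a f = h a) →
      ∃ g : Fin m → MvPolynomial (Fin m) F,
        f = (∑ i, vanishingMv A i * g i) + hhat ∧
        ∀ i j, (g i).degreeOf j ≤ (if j = i then d j - (A j).card else d j) := by
  classical
  have hcard : ∀ i, 0 < (A i).card := fun i => Finset.card_pos.mpr (hA i)
  -- the main construction
  have main : (∀ a : Fin m → F, (∀ i, a i ∈ A i) → MvPolynomial.eval a f = h a) →
      ∃ g : Fin m → MvPolynomial (Fin m) F,
        f = (∑ i, vanishingMv A i * g i) + hhat ∧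
        ∀ i j, (g i).degreeOf j ≤
          (if j = i then f.degreeOf j - (A j).card else f.degreeOf j) := by
    intro hfh
    obtain ⟨g, r, hfe, hrlt, hrle, hg⟩ := reduce_all A hA Finset.univ f
    have hr_hat : r = hhat := by
      have hz : r - hhat = 0 := by
        apply mv_eq_zero_of_grid A
        · intro i
          have h1 : (r - hhat).degreeOf i ≤ max (r.degreeOf i) (hhat.degreeOf i) := by
            rw [sub_eq_add_neg]
            refine (MvPolynomial.degreeOf_add_le _ _ _).trans ?_
            rw [MvPolynomial.degreeOf_neg]
          have h2 := hrlt i (Finset.mem_univ i)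
          have h3 := hhat_deg i
          have h4 := hcard i
          omega
        · intro a ha
          have h1 : MvPolynomial.eval a r = MvPolynomial.eval a f := by
            rw [hfe]
            simp [eval_vanishingMv A _ a, ha]
          rw [map_sub, h1, hfh a ha, hhat_agree a ha, sub_self]
      exact sub_eq_zero.mp hz
    exact ⟨g, by rw [hfe, hr_hat], fun i j => hg i (Finset.mem_univ i) j⟩
  constructor
  · constructor
    · intro hfh
      obtain ⟨g, hge, _⟩ := main hfh
      exact ⟨g, hge⟩
    · rintro ⟨g, rfl⟩ a ha
      rw [map_add, map_sum]
      rw [Finset.sum_eq_zero fun i _ => by rw [map_mul, eval_vanishingMv A i a (ha i), zero_mul]]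
      rw [zero_add, hhat_agree a ha]
  · intro d hd hfd hfh
    obtain ⟨g, hge, hg⟩ := main hfh
    refine ⟨g, hge, fun i j => ?_⟩
    refine (hg i j).trans ?_
    split_ifs with hji
    · exact Nat.sub_le_sub_right (hfd j) _
    · exact hfd j
end

section
/- Fix finite fields F_q ⊆ F_{q'} (F_q a subfield of F_{q'}). Let A ⊆ F_{q'} be a finite set, let h : A → F_{q'}, let d ≥ |A| be an integer, let ĥ ∈ F_{q'}[x] be the unique polynomial of degree ≤ |A| − 1 agreeing with h on A, and let h̃ = ĥ|_{F_q}. If f : F_q → F_{q'} lies in RS_{q'}[d, F_q | h], then there exists Fill : A → F_{q'} such that the function Quo₁(f − h̃, A, Fill) lies in RS_{q'}[d − |A|, F_q]. -/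
namespace Paper

variable {Fq Fq' : Type*}

/-- `RS ι d`: functions `F_q → F_{q'}` that are restrictions (along the subfield embedding
`ι`) of polynomials over `F_{q'}` of degree at most `d`. -/
def RS [Field Fq] [Field Fq'] (ι : Fq →+* Fq') (d : ℕ) : Set (Fq → Fq') :=
  {f | ∃ p : Polynomial Fq', p.natDegree ≤ d ∧ ∀ x, f x = Polynomial.eval (ι x) p}

/-- `RSside ι d A h`: members of `RS ι d` whose defining polynomial additionally takes the
value `h α` at every `α ∈ A`. -/
def RSside [Field Fq] [Field Fq'] (ι : Fq →+* Fq') (d : ℕ) (A : Finset Fq')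
    (h : Fq' → Fq') : Set (Fq → Fq') :=
  {f | ∃ p : Polynomial Fq', p.natDegree ≤ d ∧ (∀ α ∈ A, Polynomial.eval α p = h α) ∧
    ∀ x, f x = Polynomial.eval (ι x) p}

/-- The univariate quotient `Quo₁(f, A, Fill)(x) = f(x)/V_A(x)` for `x ∉ A`,
and `Fill(x)` for `x ∈ A`. -/
noncomputable def Quo1 [Field Fq] [Field Fq'] [DecidableEq Fq'] (ι : Fq →+* Fq')
    (f : Fq → Fq') (A : Finset Fq') (Fill : Fq' → Fq') : Fq → Fq' := fun x =>
  if ι x ∈ A then Fill (ι x) else f x / ∏ α ∈ A, (ι x - α)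

open Polynomial in
lemma prod_X_sub_C_dvd_of_eval_zero {K : Type*} [Field K] (A : Finset K) (g : K[X])
    (hg : ∀ α ∈ A, g.eval α = 0) : (∏ α ∈ A, (X - C α)) ∣ g := by
  induction A using Finset.cons_induction generalizing g with
  | empty => simp
  | cons a A ha ih =>
    have h1 : X - C a ∣ g := dvd_iff_isRoot.mpr (hg a (Finset.mem_cons_self a A))
    obtain ⟨g', rfl⟩ := h1
    rw [Finset.prod_cons]
    refine mul_dvd_mul_left _ (ih g' fun α hα => ?_)
    have := hg α (Finset.mem_cons_of_mem hα)
    have hne : α - a ≠ 0 := sub_ne_zero.mpr (by rintro rfl; exact ha hα)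
    simpa [hne, sub_eq_zero] using this

/-- Univariate quotienting, completeness: if `f ∈ RS_{q'}[d, F_q | h]` then some `Fill`
makes `Quo₁(f − h̃, A, Fill)` a member of `RS_{q'}[d − |A|, F_q]`. -/
theorem quo1_completeness [Field Fq] [Fintype Fq] [Field Fq'] [Fintype Fq'] [DecidableEq Fq']
    (ι : Fq →+* Fq') (A : Finset Fq') (h : Fq' → Fq') (d : ℕ) (hd : A.card ≤ d)
    (hhat : Polynomial Fq') (hhat_deg : hhat.degree < (A.card : WithBot ℕ))
    (hhat_agree : ∀ α ∈ A, Polynomial.eval α hhat = h α)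
    (f : Fq → Fq') (hf : f ∈ RSside ι d A h) :
    ∃ Fill : Fq' → Fq',
      Quo1 ι (fun x => f x - Polynomial.eval (ι x) hhat) A Fill ∈ RS ι (d - A.card) := by
  obtain ⟨p, hpdeg, hpA, hpf⟩ := hf
  set V : Polynomial Fq' := ∏ α ∈ A, (Polynomial.X - Polynomial.C α) with hV
  have hVmonic : V.Monic := Polynomial.monic_prod_of_monic _ _ fun α _ => Polynomial.monic_X_sub_C α
  have hVdeg : V.natDegree = A.card := by
    rw [hV, Polynomial.natDegree_prod _ _ fun α _ => Polynomial.X_sub_C_ne_zero α]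
    simp [Polynomial.natDegree_X_sub_C]
  have hdvd : V ∣ p - hhat := by
    apply prod_X_sub_C_dvd_of_eval_zero
    intro α hα
    simp [hpA α hα, hhat_agree α hα]
  obtain ⟨q, hq⟩ := hdvd
  refine ⟨fun y => q.eval y, q, ?_, ?_⟩
  · -- degree bound
    rcases eq_or_ne q 0 with rfl | hq0
    · simp
    · have hVq : (V * q).natDegree = A.card + q.natDegree := by
        rw [Polynomial.natDegree_mul hVmonic.ne_zero hq0, hVdeg]
      have hhatnd : hhat.natDegree ≤ d :=
        Polynomial.natDegree_le_iff_degree_le.mpr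
          (le_trans hhat_deg.le (by exact_mod_cast hd))
      have hsub : (p - hhat).natDegree ≤ d :=
        le_trans (Polynomial.natDegree_sub_le p hhat) (max_le hpdeg hhatnd)
      rw [← hq] at hVq
      omega
  · intro x
    unfold Quo1
    by_cases hx : ι x ∈ A
    · simp [hx]
    · have hVne : Polynomial.eval (ι x) V ≠ 0 := by
        rw [hV, Polynomial.eval_prod]
        refine Finset.prod_ne_zero_iff.mpr fun α hα => ?_
        simp only [Polynomial.eval_sub, Polynomial.eval_X, Polynomial.eval_C]
        exact sub_ne_zero.mpr (by rintro rfl; exact hx hα)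
      have := congrArg (Polynomial.eval (ι x)) hq
      simp only [Polynomial.eval_sub, Polynomial.eval_mul] at this
      simp only
      rw [hpf x]
      rw [hV, Polynomial.eval_prod] at hVne this
      simp only [Polynomial.eval_sub, Polynomial.eval_X, Polynomial.eval_C] at hVne this
      rw [if_neg hx, div_eq_iff hVne]
      linear_combination this


end Paper
end

section
/- Fix finite fields F_q ⊆ F_{q'} (F_q a subfield of F_{q'}). Let A ⊆ F_{q'} be a finite set, let h : A → F_{q'}, let d ≥ |A| be an integer, let ĥ ∈ F_{q'}[x] be the unique polynomial of degree ≤ |A| − 1 agreeing with h on A, and let h̃ = ĥ|_{F_q}. Let f : F_q → F_{q'} and ε ≥ 0 satisfy agr(f, RS_{q'}[d, F_q | h]) ≤ ε. Then for every Fill : A → F_{q'}, one has agr(Quo₁(f − h̃, A, Fill), RS_{q'}[d − |A|, F_q]) ≤ ε + |A|/q. -/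
namespace Paper

variable {Fq Fq' : Type*}

/-- Fractional agreement between two functions on a finite domain. -/
noncomputable def agr {U V : Type*} [Fintype U] (f g : U → V) : ℝ :=
  (Nat.card {x : U // f x = g x} : ℝ) / Fintype.card U

/-- Univariate quotienting, soundness: if `agr(f, RS_{q'}[d, F_q | h]) ≤ ε` then for every
`Fill`, `agr(Quo₁(f − h̃, A, Fill), RS_{q'}[d − |A|, F_q]) ≤ ε + |A|/q`. -/
theorem quo1_soundness [Field Fq] [Fintype Fq] [Field Fq'] [Fintype Fq'] [DecidableEq Fq']
    (ι : Fq →+* Fq') (A : Finset Fq') (h : Fq' → Fq') (d : ℕ) (hd : A.card ≤ d)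
    (hhat : Polynomial Fq') (hhat_deg : hhat.degree < (A.card : WithBot ℕ))
    (hhat_agree : ∀ α ∈ A, Polynomial.eval α hhat = h α)
    (f : Fq → Fq') (ε : ℝ) (hε : 0 ≤ ε)
    (hf : ∀ g ∈ RSside ι d A h, agr f g ≤ ε) :
    ∀ Fill : Fq' → Fq', ∀ g ∈ RS ι (d - A.card),
      agr (Quo1 ι (fun x => f x - Polynomial.eval (ι x) hhat) A Fill) g ≤
        ε + (A.card : ℝ) / (Fintype.card Fq : ℝ) := by
  intro Fill g hg
  obtain ⟨p, hp_deg, hp_eq⟩ := hg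
  classical
  set V : Polynomial Fq' := ∏ α ∈ A, (Polynomial.X - Polynomial.C α) with hV
  have hVdeg : V.natDegree = A.card := by
    rw [hV, Polynomial.natDegree_prod]
    · simp
    · intro α _; exact Polynomial.X_sub_C_ne_zero α
  set q := p * V + hhat with hq
  have hhat_nd : hhat.natDegree ≤ d := by
    rcases eq_or_ne hhat 0 with h0 | h0
    · simp [h0]
    · have := (Polynomial.degree_eq_natDegree h0) ▸ hhat_deg
      have : hhat.natDegree < A.card := by exact_mod_cast this
      omega
  have hq_deg : q.natDegree ≤ d := by
    refine le_trans (Polynomial.natDegree_add_le _ _) ?_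
    refine max_le (le_trans (Polynomial.natDegree_mul_le) ?_) hhat_nd
    rw [hVdeg]; omega
  have hq_eval : ∀ α ∈ A, Polynomial.eval α q = h α := by
    intro α hα
    have : Polynomial.eval α V = 0 := by
      rw [hV, Polynomial.eval_prod]
      exact Finset.prod_eq_zero hα (by simp)
    simp [hq, this, hhat_agree α hα]
  have hmem : (fun x => Polynomial.eval (ι x) q) ∈ RSside ι d A h :=
    ⟨q, hq_deg, hq_eval, fun x => rfl⟩
  have hfq := hf _ hmem
  -- counting
  set s := Finset.univ.filter fun x : Fq =>
    Quo1 ι (fun x => f x - Polynomial.eval (ι x) hhat) A Fill x = g x with hs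
  set t := Finset.univ.filter fun x : Fq => f x = Polynomial.eval (ι x) q with ht
  set b := Finset.univ.filter fun x : Fq => ι x ∈ A with hb
  have hsub : s ⊆ t ∪ b := by
    intro x hx
    rw [hs, Finset.mem_filter] at hx
    by_cases hxA : ι x ∈ A
    · exact Finset.mem_union_right _ (by simp [hb, hxA])
    · refine Finset.mem_union_left _ ?_
      have hx2 := hx.2
      rw [Quo1, if_neg hxA] at hx2
      have hVne : (∏ α ∈ A, (ι x - α)) ≠ 0 := by
        refine Finset.prod_ne_zero_iff.2 fun α hα => sub_ne_zero.2 fun hc => hxA (hc ▸ hα)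
      have : f x - Polynomial.eval (ι x) hhat = g x * ∏ α ∈ A, (ι x - α) := by
        rw [← hx2]; field_simp
      rw [ht, Finset.mem_filter]
      refine ⟨Finset.mem_univ _, ?_⟩
      have hVx : Polynomial.eval (ι x) V = ∏ α ∈ A, (ι x - α) := by
        simp [hV, Polynomial.eval_prod]
      rw [hq]
      simp only [Polynomial.eval_add, Polynomial.eval_mul, hVx, ← hp_eq x]
      linear_combination this
  have hbcard : b.card ≤ A.card := by
    have hinj : Set.InjOn ι b := fun a _ c _ hac => ι.injective hac
    calc b.card = (b.image ι).card := (Finset.card_image_of_injOn hinj).symm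
      _ ≤ A.card := Finset.card_le_card (by intro y hy; simp only [Finset.mem_image] at hy; obtain ⟨x, hx, rfl⟩ := hy; rw [hb, Finset.mem_filter] at hx; exact hx.2)
  have hscard : s.card ≤ t.card + A.card :=
    le_trans (Finset.card_le_card hsub) (le_trans (Finset.card_union_le _ _) (by omega))
  -- translate agr to filter cards
  have hagr1 : agr (Quo1 ι (fun x => f x - Polynomial.eval (ι x) hhat) A Fill) g
      = (s.card : ℝ) / Fintype.card Fq := by
    rw [agr, Nat.card_eq_fintype_card, Fintype.card_subtype]
  have hagr2 : agr f (fun x => Polynomial.eval (ι x) q) = (t.card : ℝ) / Fintype.card Fq := by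
    rw [agr, Nat.card_eq_fintype_card, Fintype.card_subtype]
  have hN : (0:ℝ) < Fintype.card Fq := by exact_mod_cast Fintype.card_pos
  rw [hagr1]
  rw [hagr2] at hfq
  have : (s.card : ℝ) / Fintype.card Fq ≤ (t.card : ℝ) / Fintype.card Fq + A.card / Fintype.card Fq := by
    rw [← add_div, div_le_div_iff_of_pos_right hN]
    exact_mod_cast hscard
  linarith

end Paper
end

section
/- Fix finite fields F_q ⊆ F_{q'} (F_q a subfield of F_{q'}). Let A, B ⊆ F_{q'} be finite sets, let d be an integer with d ≥ |A| and d ≥ |B|, let h : A × B → F_{q'}, let ĥ ∈ F_{q'}[x,y] be the unique polynomial of individual degrees at most (|A|−1, |B|−1) agreeing with h on A × B, and let h̃ = ĥ|_{F_q²}. If f : F_q² → F_{q'} lies in RM_{q'}[(d,d), F_q² | h], then there exist a function g₁ : F_q² → F_{q'} of individual degree at most (d − |A|, d) and Fill : F_q × B → F_{q'} such that the function Quo₂(f − V_A·g₁ − h̃, B, Fill) lies in RM_{q'}[(d, d − |B|), F_q²], where V_A(x) = ∏_{α∈A}(x − α) acts on the first coordinate. -/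
namespace Paper

variable {Fq Fq' : Type*}

/-- `RMind ι d₁ d₂`: functions `F_q² → F_{q'}` of individual degrees at most `(d₁, d₂)`,
i.e. restrictions (along the subfield embedding `ι`) of bivariate polynomials over
`F_{q'}` with `deg_x ≤ d₁` and `deg_y ≤ d₂`. -/
def RMind [Field Fq] [Field Fq'] (ι : Fq →+* Fq') (d1 d2 : ℕ) : Set (Fq × Fq → Fq') :=
  {f | ∃ p : MvPolynomial (Fin 2) Fq', p.degreeOf 0 ≤ d1 ∧ p.degreeOf 1 ≤ d2 ∧
    ∀ x : Fq × Fq, f x = MvPolynomial.eval ![ι x.1, ι x.2] p}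

/-- `RMindSide ι d₁ d₂ A B h`: members of `RMind ι d₁ d₂` whose defining polynomial
additionally takes the value `h a b` at every `(a, b) ∈ A × B`. -/
def RMindSide [Field Fq] [Field Fq'] (ι : Fq →+* Fq') (d1 d2 : ℕ)
    (A B : Finset Fq') (h : Fq' → Fq' → Fq') : Set (Fq × Fq → Fq') :=
  {f | ∃ p : MvPolynomial (Fin 2) Fq', p.degreeOf 0 ≤ d1 ∧ p.degreeOf 1 ≤ d2 ∧
    (∀ a ∈ A, ∀ b ∈ B, MvPolynomial.eval ![a, b] p = h a b) ∧
    ∀ x : Fq × Fq, f x = MvPolynomial.eval ![ι x.1, ι x.2] p}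

/-- The bivariate quotient `Quo₂(g, B, Fill)(x,y) = g(x,y)/V_B(y)` for `y ∉ B`,
and `Fill(x,y)` for `y ∈ B`. -/
noncomputable def Quo2 [Field Fq] [Field Fq'] [DecidableEq Fq'] (ι : Fq →+* Fq')
    (g : Fq × Fq → Fq') (B : Finset Fq') (Fill : Fq → Fq' → Fq') : Fq × Fq → Fq' := fun x =>
  if ι x.2 ∈ B then Fill x.1 (ι x.2) else g x / ∏ β ∈ B, (ι x.2 - β)



section Aux

variable {K : Type*} [Field K]

noncomputable def inj1 : Polynomial K →+* MvPolynomial (Fin 2) K :=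
  Polynomial.eval₂RingHom MvPolynomial.C (MvPolynomial.X 0)

noncomputable def toMv : Polynomial (Polynomial K) →+* MvPolynomial (Fin 2) K :=
  Polynomial.eval₂RingHom (inj1 : Polynomial K →+* MvPolynomial (Fin 2) K) (MvPolynomial.X 1)

@[simp] lemma inj1_C (a : K) :
    (inj1 (Polynomial.C a) : MvPolynomial (Fin 2) K) = MvPolynomial.C a := by
  simp [inj1]

@[simp] lemma inj1_X : (inj1 (Polynomial.X : Polynomial K)) = MvPolynomial.X 0 := by
  simp [inj1]

@[simp] lemma toMv_C (u : Polynomial K) : toMv (Polynomial.C u) = inj1 u := by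
  simp [toMv]

@[simp] lemma toMv_X :
    toMv (Polynomial.X : Polynomial (Polynomial K)) = MvPolynomial.X 1 := by
  simp [toMv]

lemma eval_toMv (a b : K) (P : Polynomial (Polynomial K)) :
    MvPolynomial.eval ![a, b] (toMv P) = Polynomial.eval₂ (Polynomial.evalRingHom a) b P := by
  have h2 : ((MvPolynomial.eval ![a, b]).comp (inj1 : Polynomial K →+* MvPolynomial (Fin 2) K))
      = Polynomial.evalRingHom a := by
    apply Polynomial.ringHom_ext <;> simp
  have h : ((MvPolynomial.eval ![a, b]).comp (toMv : Polynomial (Polynomial K) →+* _)) =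
      Polynomial.eval₂RingHom (Polynomial.evalRingHom a) b := by
    apply Polynomial.ringHom_ext
    · intro u
      simpa using RingHom.congr_fun h2 u
    · simp
  simpa using RingHom.congr_fun h P

lemma fin2_single (m : Fin 2 →₀ ℕ) :
    Finsupp.single (0 : Fin 2) (m 0) + Finsupp.single 1 (m 1) = m := by
  ext i
  fin_cases i <;> simp [Finsupp.single_apply]

lemma toMv_monomial (m : Fin 2 →₀ ℕ) (c : K) :
    toMv (Polynomial.C (Polynomial.C c * Polynomial.X ^ (m 0)) * Polynomial.X ^ (m 1)) =
      MvPolynomial.monomial m c := by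
  rw [map_mul, map_pow, toMv_C, toMv_X, map_mul, map_pow, inj1_C, inj1_X,
    MvPolynomial.X_pow_eq_monomial, MvPolynomial.X_pow_eq_monomial, MvPolynomial.C_apply,
    MvPolynomial.monomial_mul, MvPolynomial.monomial_mul, zero_add, mul_one, mul_one, fin2_single]

/-- The bivariate representation of a bivariate `MvPolynomial`. -/
noncomputable def biRep (p : MvPolynomial (Fin 2) K) : Polynomial (Polynomial K) :=
  ∑ m ∈ p.support,
    Polynomial.C (Polynomial.C (MvPolynomial.coeff m p) * Polynomial.X ^ (m 0)) *
      Polynomial.X ^ (m 1)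

lemma toMv_biRep (p : MvPolynomial (Fin 2) K) : toMv (biRep p) = p := by
  rw [biRep, map_sum]
  simp_rw [toMv_monomial]
  exact (MvPolynomial.as_sum p).symm

lemma natDegree_biRep (p : MvPolynomial (Fin 2) K) :
    (biRep p).natDegree ≤ p.degreeOf 1 := by
  apply Polynomial.natDegree_sum_le_of_forall_le
  intro m hm
  rw [Polynomial.C_mul_X_pow_eq_monomial]
  exact (Polynomial.natDegree_monomial_le _).trans (MvPolynomial.monomial_le_degreeOf 1 hm)

lemma coeff_biRep (p : MvPolynomial (Fin 2) K) (i : ℕ) :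
    ((biRep p).coeff i).natDegree ≤ p.degreeOf 0 := by
  rw [biRep, Polynomial.finset_sum_coeff]
  apply Polynomial.natDegree_sum_le_of_forall_le
  intro m hm
  rw [Polynomial.C_mul_X_pow_eq_monomial, Polynomial.coeff_monomial]
  split
  · exact (Polynomial.natDegree_C_mul_le _ _).trans
      (by simpa using MvPolynomial.monomial_le_degreeOf 0 hm)
  · simp


lemma mv_degreeOf_monomial_le (i : Fin 2) (s : Fin 2 →₀ ℕ) (a : K) :
    MvPolynomial.degreeOf i (MvPolynomial.monomial s a) ≤ s i := by
  rcases eq_or_ne a 0 with rfl | ha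
  · simp
  · rw [MvPolynomial.degreeOf_monomial_eq s i ha]

lemma inj1_monomial (j : ℕ) (c : K) :
    inj1 (Polynomial.monomial j c) =
      MvPolynomial.monomial (Finsupp.single (0 : Fin 2) j) c := by
  rw [← Polynomial.C_mul_X_pow_eq_monomial, map_mul, map_pow, inj1_C, inj1_X,
    MvPolynomial.C_mul_X_pow_eq_monomial]

lemma degreeOf_inj1_le (u : Polynomial K) (i : Fin 2) :
    MvPolynomial.degreeOf i (inj1 u) ≤ if i = 0 then u.natDegree else 0 := by
  conv_lhs => rw [Polynomial.as_sum_support u, map_sum]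
  refine (MvPolynomial.degreeOf_sum_le _ _ _).trans (Finset.sup_le fun j hj => ?_)
  rw [inj1_monomial]
  refine (mv_degreeOf_monomial_le _ _ _).trans ?_
  rcases eq_or_ne i 0 with rfl | hi
  · simpa using Polynomial.le_natDegree_of_mem_supp j hj
  · simp [Finsupp.single_apply, Ne.symm hi, hi]

lemma degreeOf0_toMv (Q : Polynomial (Polynomial K)) {D : ℕ}
    (h : ∀ i, (Q.coeff i).natDegree ≤ D) :
    MvPolynomial.degreeOf 0 (toMv Q) ≤ D := by
  conv_lhs => rw [Polynomial.as_sum_support Q, map_sum]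
  refine (MvPolynomial.degreeOf_sum_le _ _ _).trans (Finset.sup_le fun j hj => ?_)
  rw [← Polynomial.C_mul_X_pow_eq_monomial, map_mul, map_pow, toMv_C, toMv_X]
  refine (MvPolynomial.degreeOf_mul_le _ _ _).trans ?_
  have h1 : MvPolynomial.degreeOf 0 ((MvPolynomial.X 1 : MvPolynomial (Fin 2) K) ^ j) = 0 := by
    refine Nat.le_zero.mp ((MvPolynomial.degreeOf_pow_le _ _ _).trans ?_)
    rw [MvPolynomial.degreeOf_X]
    simp
  rw [h1, add_zero]
  exact ((degreeOf_inj1_le _ 0).trans (by simpa using h j))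

lemma degreeOf1_toMv (Q : Polynomial (Polynomial K)) :
    MvPolynomial.degreeOf 1 (toMv Q) ≤ Q.natDegree := by
  conv_lhs => rw [Polynomial.as_sum_support Q, map_sum]
  refine (MvPolynomial.degreeOf_sum_le _ _ _).trans (Finset.sup_le fun j hj => ?_)
  rw [← Polynomial.C_mul_X_pow_eq_monomial, map_mul, map_pow, toMv_C, toMv_X]
  refine (MvPolynomial.degreeOf_mul_le _ _ _).trans ?_
  have h0 : MvPolynomial.degreeOf 1 (inj1 (Q.coeff j)) = 0 :=
    Nat.le_zero.mp (by simpa using degreeOf_inj1_le (Q.coeff j) 1)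
  have h1 : MvPolynomial.degreeOf 1 ((MvPolynomial.X 1 : MvPolynomial (Fin 2) K) ^ j) ≤ j := by
    refine (MvPolynomial.degreeOf_pow_le _ _ _).trans ?_
    rw [MvPolynomial.degreeOf_X]
    simp
  rw [h0, zero_add]
  exact h1.trans (Polynomial.le_natDegree_of_mem_supp j hj)

/-- Division of a bivariate polynomial (coefficients in `K[x]`) by a monic polynomial
with scalar coefficients keeps the coefficient degrees bounded. -/
lemma div_mod_coeff_bound (w : Polynomial K) (hw : w.Monic) (P : Polynomial (Polynomial K))
    {D : ℕ} (hP : ∀ j, (P.coeff j).natDegree ≤ D) :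
    (∀ i, ((P /ₘ (w.map Polynomial.C)).coeff i).natDegree ≤ D) ∧
    (∀ i, ((P %ₘ (w.map Polynomial.C)).coeff i).natDegree ≤ D) := by
  set vB := w.map (Polynomial.C : K →+* Polynomial K) with hvB
  have hvBm : vB.Monic := hw.map _
  set q0 : Polynomial (Polynomial K) :=
    ∑ j ∈ P.support, Polynomial.C (P.coeff j) *
      ((Polynomial.X ^ j /ₘ w).map (Polynomial.C : K →+* Polynomial K)) with hq0
  set r0 : Polynomial (Polynomial K) :=
    ∑ j ∈ P.support, Polynomial.C (P.coeff j) *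
      ((Polynomial.X ^ j %ₘ w).map (Polynomial.C : K →+* Polynomial K)) with hr0
  have key : P /ₘ vB = q0 ∧ P %ₘ vB = r0 := by
    apply Polynomial.div_modByMonic_unique q0 r0 hvBm
    constructor
    · rw [hq0, hr0, Finset.mul_sum, ← Finset.sum_add_distrib]
      conv_rhs => rw [Polynomial.as_sum_support P]
      refine Finset.sum_congr rfl fun j hj => ?_
      rw [← Polynomial.C_mul_X_pow_eq_monomial]
      calc Polynomial.C (P.coeff j) * ((Polynomial.X ^ j %ₘ w).map Polynomial.C) +
            vB * (Polynomial.C (P.coeff j) * ((Polynomial.X ^ j /ₘ w).map Polynomial.C))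
          = Polynomial.C (P.coeff j) *
            (((Polynomial.X ^ j %ₘ w) + w * (Polynomial.X ^ j /ₘ w)).map Polynomial.C) := by
            rw [Polynomial.map_add, Polynomial.map_mul]
            ring
        _ = Polynomial.C (P.coeff j) * Polynomial.X ^ j := by
            rw [Polynomial.modByMonic_add_div _ w, Polynomial.map_pow, Polynomial.map_X]
    · have hbot : (⊥ : WithBot ℕ) < vB.degree := by
        rw [bot_lt_iff_ne_bot, Ne, Polynomial.degree_eq_bot]
        exact hvBm.ne_zero
      refine (Polynomial.degree_sum_le _ _).trans_lt ((Finset.sup_lt_iff hbot).mpr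
        fun j hj => ?_)
      refine (Polynomial.degree_mul_le _ _).trans_lt ?_
      have h1 : (Polynomial.C (P.coeff j)).degree ≤ 0 := Polynomial.degree_C_le
      have h2 : ((Polynomial.X ^ j %ₘ w).map (Polynomial.C : K →+* Polynomial K)).degree <
          vB.degree := by
        rw [hvB, Polynomial.degree_map_eq_of_injective Polynomial.C_injective,
          Polynomial.degree_map_eq_of_injective Polynomial.C_injective]
        exact Polynomial.degree_modByMonic_lt _ hw
      calc (Polynomial.C (P.coeff j)).degree +
            ((Polynomial.X ^ j %ₘ w).map (Polynomial.C : K →+* Polynomial K)).degree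
          ≤ 0 + ((Polynomial.X ^ j %ₘ w).map (Polynomial.C : K →+* Polynomial K)).degree :=
            add_le_add_left h1 _
        _ = ((Polynomial.X ^ j %ₘ w).map (Polynomial.C : K →+* Polynomial K)).degree := by
            rw [zero_add]
        _ < vB.degree := h2
  have hbound : ∀ (F : ℕ → Polynomial K) (i : ℕ),
      (((∑ j ∈ P.support, Polynomial.C (P.coeff j) *
        ((F j).map (Polynomial.C : K →+* Polynomial K))).coeff i).natDegree) ≤ D := by
    intro F i
    rw [Polynomial.finset_sum_coeff]
    apply Polynomial.natDegree_sum_le_of_forall_le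
    intro j hj
    rw [Polynomial.coeff_C_mul, Polynomial.coeff_map]
    exact (Polynomial.natDegree_mul_le).trans (by simpa using hP j)
  exact ⟨fun i => key.1 ▸ hbound _ i, fun i => key.2 ▸ hbound _ i⟩

lemma prod_X_sub_C_dvd' (A : Finset K) (c : Polynomial K) (h : ∀ α ∈ A, c.eval α = 0) :
    (∏ α ∈ A, (Polynomial.X - Polynomial.C α)) ∣ c := by
  apply Finset.prod_dvd_of_coprime
  · exact (Polynomial.pairwise_coprime_X_sub_C Function.injective_id).set_pairwise _
  · intro α hα
    rw [Polynomial.dvd_iff_isRoot]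
    exact h α hα


end Aux


/-- Bivariate quotienting, completeness: if `f ∈ RM_{q'}[(d,d), F_q² | h]` then there are
`g₁` of individual degree at most `(d − |A|, d)` and `Fill` such that
`Quo₂(f − V_A·g₁ − h̃, B, Fill)` has individual degree at most `(d, d − |B|)`. -/
theorem quo2_completeness [Field Fq] [Fintype Fq] [Field Fq'] [Fintype Fq'] [DecidableEq Fq']
    (ι : Fq →+* Fq') (A B : Finset Fq') (d : ℕ) (hdA : A.card ≤ d) (hdB : B.card ≤ d)
    (h : Fq' → Fq' → Fq') (hhat : MvPolynomial (Fin 2) Fq')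
    (hhat_deg0 : hhat.degreeOf 0 ≤ A.card - 1) (hhat_deg1 : hhat.degreeOf 1 ≤ B.card - 1)
    (hhat_agree : ∀ a ∈ A, ∀ b ∈ B, MvPolynomial.eval ![a, b] hhat = h a b)
    (f : Fq × Fq → Fq') (hf : f ∈ RMindSide ι d d A B h) :
    ∃ g₁ ∈ RMind ι (d - A.card) d, ∃ Fill : Fq → Fq' → Fq',
      Quo2 ι (fun x => f x - (∏ α ∈ A, (ι x.1 - α)) * g₁ x -
          MvPolynomial.eval ![ι x.1, ι x.2] hhat) B Fill ∈ RMind ι d (d - B.card) := by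
  classical
  obtain ⟨p, hp0, hp1, hpAB, hpf⟩ := hf
  set p' : MvPolynomial (Fin 2) Fq' := p - hhat with hp'def
  have hd0 : p'.degreeOf 0 ≤ d :=
    (MvPolynomial.degreeOf_sub_le 0 p hhat).trans
      (max_le hp0 (hhat_deg0.trans ((Nat.sub_le _ _).trans hdA)))
  have hd1 : p'.degreeOf 1 ≤ d :=
    (MvPolynomial.degreeOf_sub_le 1 p hhat).trans
      (max_le hp1 (hhat_deg1.trans ((Nat.sub_le _ _).trans hdB)))
  set P : Polynomial (Polynomial Fq') := biRep p' with hPdef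
  have hPmv : toMv P = p' := toMv_biRep p'
  have hPdeg : P.natDegree ≤ d := (natDegree_biRep p').trans hd1
  have hPcoeff : ∀ i, (P.coeff i).natDegree ≤ d := fun i => (coeff_biRep p' i).trans hd0
  set wB : Polynomial Fq' := ∏ β ∈ B, (Polynomial.X - Polynomial.C β) with hwBdef
  have hwBm : wB.Monic :=
    Polynomial.monic_prod_of_monic _ _ fun β _ => Polynomial.monic_X_sub_C β
  have hwBdeg : wB.natDegree = B.card := by
    rw [hwBdef, Polynomial.natDegree_prod _ _ fun β _ => Polynomial.X_sub_C_ne_zero β]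
    simp
  set vB : Polynomial (Polynomial Fq') := wB.map Polynomial.C with hvBdef
  have hvBm : vB.Monic := hwBm.map _
  have hvBdeg : vB.natDegree = B.card := by rw [hvBdef, hwBm.natDegree_map, hwBdeg]
  set q : Polynomial (Polynomial Fq') := P /ₘ vB with hqdef
  set s : Polynomial (Polynomial Fq') := P %ₘ vB with hsdef
  have hqs : s + vB * q = P := Polynomial.modByMonic_add_div P vB
  obtain ⟨hqc, hsc⟩ := div_mod_coeff_bound wB hwBm P hPcoeff
  have hp'AB : ∀ a ∈ A, ∀ b ∈ B, MvPolynomial.eval ![a, b] p' = 0 := by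
    intro a ha b hb
    rw [hp'def, map_sub, hpAB a ha b hb, hhat_agree a ha b hb, sub_self]
  have hEvB : ∀ a b : Fq',
      Polynomial.eval₂ (Polynomial.evalRingHom a) b vB = ∏ β ∈ B, (b - β) := by
    intro a b
    rw [← Polynomial.eval_map, hvBdef, Polynomial.map_map]
    have hid : (Polynomial.evalRingHom a).comp (Polynomial.C : Fq' →+* Polynomial Fq')
        = RingHom.id _ := by
      ext r
      simp
    rw [hid, Polynomial.map_id, hwBdef, Polynomial.eval_prod]
    simp
  have hsEval : ∀ a ∈ A, ∀ b ∈ B, Polynomial.eval₂ (Polynomial.evalRingHom a) b s = 0 := by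
    intro a ha b hb
    have h1 : Polynomial.eval₂ (Polynomial.evalRingHom a) b P = 0 := by
      rw [← eval_toMv, hPmv]
      exact hp'AB a ha b hb
    have h2 : Polynomial.eval₂ (Polynomial.evalRingHom a) b vB = 0 := by
      rw [hEvB]
      exact Finset.prod_eq_zero hb (sub_self b)
    have h3 : Polynomial.eval₂ (Polynomial.evalRingHom a) b (s + vB * q) = 0 := by
      rw [hqs, h1]
    rw [Polynomial.eval₂_add, Polynomial.eval₂_mul, h2, zero_mul, add_zero] at h3
    exact h3
  have hsA : ∀ a ∈ A, ∀ i, (s.coeff i).eval a = 0 := by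
    intro a ha i
    have hmap : s.map (Polynomial.evalRingHom a) = 0 := by
      rcases eq_or_ne s 0 with h0 | h0
      · rw [h0, Polynomial.map_zero]
      · apply Polynomial.eq_zero_of_natDegree_lt_card_of_eval_eq_zero' _ B
        · intro b hb
          rw [Polynomial.eval_map]
          exact hsEval a ha b hb
        · refine lt_of_le_of_lt Polynomial.natDegree_map_le ?_
          rw [Polynomial.natDegree_lt_iff_degree_lt h0, ← hvBdeg,
            ← Polynomial.degree_eq_natDegree hvBm.ne_zero]
          exact Polynomial.degree_modByMonic_lt P hvBm
    have := congrArg (fun z => Polynomial.coeff z i) hmap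
    simpa [Polynomial.coeff_map] using this
  set wA : Polynomial Fq' := ∏ α ∈ A, (Polynomial.X - Polynomial.C α) with hwAdef
  have hwAm : wA.Monic :=
    Polynomial.monic_prod_of_monic _ _ fun α _ => Polynomial.monic_X_sub_C α
  have hwAdeg : wA.natDegree = A.card := by
    rw [hwAdef, Polynomial.natDegree_prod _ _ fun α _ => Polynomial.X_sub_C_ne_zero α]
    simp
  have hdvd : ∀ i, wA ∣ s.coeff i := fun i =>
    prod_X_sub_C_dvd' A _ (fun α hα => hsA α hα i)
  have hfac : ∀ i, wA * (s.coeff i /ₘ wA) = s.coeff i := by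
    intro i
    have h0 : s.coeff i %ₘ wA = 0 := (Polynomial.modByMonic_eq_zero_iff_dvd hwAm).mpr (hdvd i)
    have h1 := Polynomial.modByMonic_add_div (s.coeff i) wA
    rwa [h0, zero_add] at h1
  set G : Polynomial (Polynomial Fq') :=
    ∑ i ∈ s.support, Polynomial.C (s.coeff i /ₘ wA) * Polynomial.X ^ i with hGdef
  have hGs : Polynomial.C wA * G = s := by
    rw [hGdef, Finset.mul_sum]
    conv_rhs => rw [Polynomial.as_sum_support s]
    refine Finset.sum_congr rfl fun i hi => ?_
    rw [← mul_assoc, ← map_mul, hfac i, Polynomial.C_mul_X_pow_eq_monomial]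
  have hGdeg : G.natDegree ≤ d := by
    refine Polynomial.natDegree_sum_le_of_forall_le _ _ fun i hi => ?_
    rw [Polynomial.C_mul_X_pow_eq_monomial]
    refine (Polynomial.natDegree_monomial_le _).trans ?_
    exact (Polynomial.le_natDegree_of_mem_supp i hi).trans
      ((Polynomial.natDegree_modByMonic_le P hvBm).trans (hvBdeg.trans_le hdB))
  have hGcoeff : ∀ k, (G.coeff k).natDegree ≤ d - A.card := by
    intro k
    rw [hGdef, Polynomial.finset_sum_coeff]
    refine Polynomial.natDegree_sum_le_of_forall_le _ _ fun i hi => ?_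
    rw [Polynomial.C_mul_X_pow_eq_monomial, Polynomial.coeff_monomial]
    split
    · rw [Polynomial.natDegree_divByMonic _ hwAm, hwAdeg]
      exact Nat.sub_le_sub_right (hsc i) _
    · simp
  have hqdeg : q.natDegree ≤ d - B.card := by
    rw [hqdef, Polynomial.natDegree_divByMonic P hvBm, hvBdeg]
    exact Nat.sub_le_sub_right hPdeg _
  refine ⟨fun x => MvPolynomial.eval ![ι x.1, ι x.2] (toMv G),
    ⟨toMv G, degreeOf0_toMv G hGcoeff, (degreeOf1_toMv G).trans hGdeg, fun x => rfl⟩,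
    fun x1 c => MvPolynomial.eval ![ι x1, c] (toMv q),
    toMv q, degreeOf0_toMv q hqc, (degreeOf1_toMv q).trans hqdeg, ?_⟩
  intro x
  simp only [Quo2]
  by_cases hb : ι x.2 ∈ B
  · rw [if_pos hb]
  · rw [if_neg hb]
    have hkey : MvPolynomial.eval ![ι x.1, ι x.2] p - MvPolynomial.eval ![ι x.1, ι x.2] hhat
        = (∏ α ∈ A, (ι x.1 - α)) * MvPolynomial.eval ![ι x.1, ι x.2] (toMv G)
          + (∏ β ∈ B, (ι x.2 - β)) * MvPolynomial.eval ![ι x.1, ι x.2] (toMv q) := by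
      have h1 : p' = toMv (Polynomial.C wA * G) + toMv (vB * q) := by
        rw [← map_add, hGs, hqs, hPmv]
      have h2 : MvPolynomial.eval ![ι x.1, ι x.2] p' =
          MvPolynomial.eval ![ι x.1, ι x.2] (toMv (Polynomial.C wA * G)) +
          MvPolynomial.eval ![ι x.1, ι x.2] (toMv (vB * q)) := by
        rw [← map_add, ← h1]
      have h3 : MvPolynomial.eval ![ι x.1, ι x.2] (toMv (Polynomial.C wA * G)) =
          (∏ α ∈ A, (ι x.1 - α)) * MvPolynomial.eval ![ι x.1, ι x.2] (toMv G) := by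
        rw [eval_toMv, Polynomial.eval₂_mul, Polynomial.eval₂_C, ← eval_toMv]
        congr 1
        rw [Polynomial.coe_evalRingHom, hwAdef, Polynomial.eval_prod]
        simp
      have h4 : MvPolynomial.eval ![ι x.1, ι x.2] (toMv (vB * q)) =
          (∏ β ∈ B, (ι x.2 - β)) * MvPolynomial.eval ![ι x.1, ι x.2] (toMv q) := by
        rw [eval_toMv, Polynomial.eval₂_mul, hEvB, ← eval_toMv]
      rw [hp'def, map_sub] at h2
      rw [h2, h3, h4]
    have hne : (∏ β ∈ B, (ι x.2 - β)) ≠ 0 :=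
      Finset.prod_ne_zero_iff.mpr fun β hβ => sub_ne_zero.mpr fun e => hb (e ▸ hβ)
    rw [hpf x]
    have hnum : MvPolynomial.eval ![ι x.1, ι x.2] p -
        (∏ α ∈ A, (ι x.1 - α)) * MvPolynomial.eval ![ι x.1, ι x.2] (toMv G) -
        MvPolynomial.eval ![ι x.1, ι x.2] hhat
        = (∏ β ∈ B, (ι x.2 - β)) * MvPolynomial.eval ![ι x.1, ι x.2] (toMv q) := by
      linear_combination hkey
    rw [hnum, mul_div_cancel_left₀ _ hne]

end Paper
end

section
/- Fix finite fields F_q ⊆ F_{q'} (F_q a subfield of F_{q'}). Let A, B ⊆ F_{q'} be finite sets, let d be an integer with d ≥ |A| and d ≥ |B|, let h : A × B → F_{q'}, let ĥ ∈ F_{q'}[x,y] be the unique polynomial of individual degrees at most (|A|−1, |B|−1) agreeing with h on A × B, and let h̃ = ĥ|_{F_q²}. Suppose Q : F_q² → F_{q'} satisfies agr(Q, RM_{q'}[(d,d), F_q² | h]) ≤ ε. Then for every g₁ : F_q² → F_{q'} and every Fill : F_q × B → F_{q'}, setting g₂ = Quo₂(Q − V_A·g₁ − h̃, B, Fill) (with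 V_A acting on the first coordinate), there do NOT exist functions G₁, G₂ : F_q² → F_{q'} of individual degrees at most (d − |A|, d) and (d, d − |B|) respectively and a set U ⊆ F_q² with |U|/q² > ε + |B|/q such that g₁|_U = G₁|_U and g₂|_U = G₂|_U. -/
namespace Paper

variable {Fq Fq' : Type*}

open MvPolynomial

lemma deg_lin_le {R : Type*} [CommRing R] [Nontrivial R] (i j : Fin 2) (α : R) :
    (X j - C α : MvPolynomial (Fin 2) R).degreeOf i ≤ if i = j then 1 else 0 := by
  rw [sub_eq_add_neg, ← C_neg]
  refine (degreeOf_add_le _ _ _).trans ?_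
  simp [degreeOf_X, degreeOf_C]

lemma deg_prod_lin_le {R : Type*} [CommRing R] [Nontrivial R] (i j : Fin 2) (A : Finset R) :
    (∏ α ∈ A, (X j - C α) : MvPolynomial (Fin 2) R).degreeOf i ≤
      if i = j then A.card else 0 := by
  refine (degreeOf_prod_le _ _ _).trans ?_
  calc ∑ α ∈ A, ((X j - C α : MvPolynomial (Fin 2) R).degreeOf i)
      ≤ ∑ _α ∈ A, (if i = j then 1 else 0) := Finset.sum_le_sum fun α _ => deg_lin_le i j α
    _ = if i = j then A.card else 0 := by split <;> simp [Finset.sum_const]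

/-- Bivariate quotienting, soundness: if `agr(Q, RM_{q'}[(d,d), F_q² | h]) ≤ ε`, then for
all `g₁` and `Fill`, with `g₂ = Quo₂(Q − V_A·g₁ − h̃, B, Fill)`, the pair `(g₁, g₂)` cannot
have correlated agreement on a set of fractional size greater than `ε + |B|/q` with
functions of individual degrees `(d − |A|, d)` and `(d, d − |B|)` respectively. -/
theorem quo2_soundness [Field Fq] [Fintype Fq] [Field Fq'] [Fintype Fq'] [DecidableEq Fq']
    (ι : Fq →+* Fq') (A B : Finset Fq') (d : ℕ) (hdA : A.card ≤ d) (hdB : B.card ≤ d)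
    (h : Fq' → Fq' → Fq') (hhat : MvPolynomial (Fin 2) Fq')
    (hhat_deg0 : hhat.degreeOf 0 ≤ A.card - 1) (hhat_deg1 : hhat.degreeOf 1 ≤ B.card - 1)
    (hhat_agree : ∀ a ∈ A, ∀ b ∈ B, MvPolynomial.eval ![a, b] hhat = h a b)
    (Q : Fq × Fq → Fq') (ε : ℝ) (hε : 0 ≤ ε)
    (hQ : ∀ g ∈ RMindSide ι d d A B h, agr Q g ≤ ε) :
    ∀ (g₁ : Fq × Fq → Fq') (Fill : Fq → Fq' → Fq'),
      ¬ ∃ (G₁ G₂ : Fq × Fq → Fq') (U : Finset (Fq × Fq)),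
        G₁ ∈ RMind ι (d - A.card) d ∧ G₂ ∈ RMind ι d (d - B.card) ∧
        ε + (B.card : ℝ) / (Fintype.card Fq : ℝ) <
          (U.card : ℝ) / (Fintype.card Fq : ℝ) ^ 2 ∧
        (∀ x ∈ U, g₁ x = G₁ x) ∧
        ∀ x ∈ U,
          Quo2 ι (fun y => Q y - (∏ α ∈ A, (ι y.1 - α)) * g₁ y -
            MvPolynomial.eval ![ι y.1, ι y.2] hhat) B Fill x = G₂ x := by
  intro g₁ Fill
  rintro ⟨G₁, G₂, U, ⟨P₁, hP10, hP11, hP1e⟩, ⟨P₂, hP20, hP21, hP2e⟩, hU, hg₁, hg₂⟩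
  classical
  set VA : MvPolynomial (Fin 2) Fq' := ∏ α ∈ A, (X 0 - C α) with hVA
  set VB : MvPolynomial (Fin 2) Fq' := ∏ β ∈ B, (X 1 - C β) with hVB
  set p : MvPolynomial (Fin 2) Fq' := VA * P₁ + VB * P₂ + hhat with hp
  set g : Fq × Fq → Fq' := fun x => eval ![ι x.1, ι x.2] p with hg
  -- evaluation of VA, VB
  have evalVA : ∀ v : Fin 2 → Fq', eval v VA = ∏ α ∈ A, (v 0 - α) := by
    intro v; rw [hVA, map_prod]; simp
  have evalVB : ∀ v : Fin 2 → Fq', eval v VB = ∏ β ∈ B, (v 1 - β) := by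
    intro v; rw [hVB, map_prod]; simp
  -- g is a valid codeword
  have hgmem : g ∈ RMindSide ι d d A B h := by
    refine ⟨p, ?_, ?_, ?_, fun x => rfl⟩
    · refine (degreeOf_add_le _ _ _).trans (max_le ((degreeOf_add_le _ _ _).trans (max_le ?_ ?_)) ?_)
      · refine (degreeOf_mul_le _ _ _).trans ?_
        calc VA.degreeOf 0 + P₁.degreeOf 0 ≤ A.card + (d - A.card) := by
              exact Nat.add_le_add ((deg_prod_lin_le 0 0 A).trans (by simp)) hP10
          _ = d := Nat.add_sub_cancel' hdA
      · refine (degreeOf_mul_le _ _ _).trans ?_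
        calc VB.degreeOf 0 + P₂.degreeOf 0 ≤ 0 + d :=
              Nat.add_le_add ((deg_prod_lin_le 0 1 B).trans (by simp)) hP20
          _ ≤ d := by omega
      · exact hhat_deg0.trans (by omega)
    · refine (degreeOf_add_le _ _ _).trans (max_le ((degreeOf_add_le _ _ _).trans (max_le ?_ ?_)) ?_)
      · refine (degreeOf_mul_le _ _ _).trans ?_
        calc VA.degreeOf 1 + P₁.degreeOf 1 ≤ 0 + d :=
              Nat.add_le_add ((deg_prod_lin_le 1 0 A).trans (by simp)) hP11
          _ ≤ d := by omega
      · refine (degreeOf_mul_le _ _ _).trans ?_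
        calc VB.degreeOf 1 + P₂.degreeOf 1 ≤ B.card + (d - B.card) :=
              Nat.add_le_add ((deg_prod_lin_le 1 1 B).trans (by simp)) hP21
          _ = d := Nat.add_sub_cancel' hdB
      · exact hhat_deg1.trans (by omega)
    · intro a ha b hb
      rw [hp]
      simp only [map_add, map_mul, evalVA, evalVB]
      have h1 : (∏ α ∈ A, ((![a, b] : Fin 2 → Fq') 0 - α)) = 0 :=
        Finset.prod_eq_zero ha (by simp)
      have h2 : (∏ β ∈ B, ((![a, b] : Fin 2 → Fq') 1 - β)) = 0 :=
        Finset.prod_eq_zero hb (by simp)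
      rw [h1, h2, hhat_agree a ha b hb]
      ring
  have hQg : agr Q g ≤ ε := hQ g hgmem
  -- on good points of U, Q agrees with g
  have hagree : ∀ x ∈ U, ι x.2 ∉ B → Q x = g x := by
    intro x hx hxB
    have hVBx : (∏ β ∈ B, (ι x.2 - β)) ≠ 0 := by
      rw [Finset.prod_ne_zero_iff]
      intro β hβ hc
      rw [sub_eq_zero] at hc
      exact hxB (hc ▸ hβ)
    have h2 := hg₂ x hx
    simp only [Quo2, if_neg hxB] at h2
    rw [div_eq_iff hVBx] at h2
    have : Q x = (∏ α ∈ A, (ι x.1 - α)) * g₁ x +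
        (∏ β ∈ B, (ι x.2 - β)) * G₂ x + eval ![ι x.1, ι x.2] hhat := by
      linear_combination h2
    rw [hg, hp]
    simp only [map_add, map_mul, evalVA, evalVB]
    rw [this, hg₁ x hx, hP1e x, hP2e x]
    simp
  -- counting
  set q : ℕ := Fintype.card Fq with hqdef
  have hq0 : 0 < q := Fintype.card_pos
  have hqR : (0:ℝ) < q := by exact_mod_cast hq0
  set S : Finset (Fq × Fq) := Finset.univ.filter (fun x => Q x = g x) with hS
  have hcardS : (Nat.card {x : Fq × Fq // Q x = g x}) = S.card := by
    rw [Nat.card_eq_fintype_card, hS, ← Fintype.card_subtype]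
  set T : Finset (Fq × Fq) := U.filter (fun x => ι x.2 ∉ B) with hT
  have hTS : T ⊆ S := by
    intro x hx
    rw [hT, Finset.mem_filter] at hx
    rw [hS, Finset.mem_filter]
    exact ⟨Finset.mem_univ x, hagree x hx.1 hx.2⟩
  have hbad : (U.filter (fun x => ι x.2 ∈ B)).card ≤ q * B.card := by
    have hsub : U.filter (fun x => ι x.2 ∈ B) ⊆
        Finset.univ ×ˢ (Finset.univ.filter (fun y : Fq => ι y ∈ B)) := by
      intro x hx
      rw [Finset.mem_filter] at hx
      rw [Finset.mem_product]
      exact ⟨Finset.mem_univ _, Finset.mem_filter.2 ⟨Finset.mem_univ _, hx.2⟩⟩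
    refine (Finset.card_le_card hsub).trans ?_
    rw [Finset.card_product, Finset.card_univ]
    refine Nat.mul_le_mul_left _ ?_
    refine Finset.card_le_card_of_injOn ι (fun y hy => (Finset.mem_filter.1 hy).2) ?_
    exact fun a _ b _ hab => ι.injective hab
  have hcount : U.card ≤ T.card + q * B.card := by
    have := Finset.card_filter_add_card_filter_not (s := U)
      (p := fun x => ι x.2 ∈ B)
    have hTeq : (U.filter (fun x => ¬ (ι x.2 ∈ B))).card = T.card := rfl
    omega
  have hagr : agr Q g = (S.card : ℝ) / (q:ℝ)^2 := by
    rw [agr, hcardS]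
    congr 1
    rw [Fintype.card_prod]
    push_cast
    ring
  have h1 : (U.card : ℝ) ≤ (T.card:ℝ) + (q:ℝ) * B.card := by exact_mod_cast hcount
  have h2 : (T.card : ℝ) ≤ (S.card:ℝ) := by exact_mod_cast Finset.card_le_card hTS
  have h3 : (U.card:ℝ) - (q:ℝ)*B.card ≤ (S.card:ℝ) := by linarith
  have h4 : ((U.card:ℝ) - (q:ℝ)*B.card)/(q:ℝ)^2 ≤ (S.card:ℝ)/(q:ℝ)^2 := by gcongr
  have h5 : ((U.card:ℝ) - (q:ℝ)*B.card)/(q:ℝ)^2 = (U.card:ℝ)/(q:ℝ)^2 - (B.card:ℝ)/(q:ℝ) := by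
    field_simp
  rw [h5] at h4
  rw [hagr] at hQg
  linarith


end Paper
end
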